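/- Consider the 2×2 linear system with matrix entries a₁₁ = 𝒜/(λ₁ - conj(λ₁)), a₁₂ = ℬ/(λ₁ - conj(λ₂)), a₂₁ = ℬ/(λ₂ - conj(λ₁)), a₂₂ = 𝒜/(λ₂ - conj(λ₂)), where λ₁ = (r-m+is)(cos θ - 1), λ₂ = (r-m-is)(cos θ + 1), 𝒜, ℬ ∈ ℝ, s > 0, sin θ ≠ 0. Then the determinant a₁₁a₂₂ - a₁₂a₂₁ equals F/(4s²sin²θ·((r-m)²+s²)) up to sign, where F = 𝒜²((r-m)² + s²) - ℬ² s² sin²θ; in particular the system is uniquely solvable if and only if F ≠ 0. -/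
import Mathlib

open Complex

theorem dressing_determinant (r m s θ : ℝ) (𝒜 ℬ : ℝ)
    (hs : 0 < s) (hsin : Real.sin θ ≠ 0) :
    let lam₁ : ℂ := ((r : ℂ) - m + Complex.I * s) * ((Real.cos θ : ℝ) - 1)
    let lam₂ : ℂ := ((r : ℂ) - m - Complex.I * s) * ((Real.cos θ : ℝ) + 1)
    let a₁₁ : ℂ := (𝒜 : ℂ) / (lam₁ - (starRingEnd ℂ) lam₁)
    let a₁₂ : ℂ := (ℬ : ℂ) / (lam₁ - (starRingEnd ℂ) lam₂)
    let a₂₁ : ℂ := (ℬ : ℂ) / (lam₂ - (starRingEnd ℂ) lam₁)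
    let a₂₂ : ℂ := (𝒜 : ℂ) / (lam₂ - (starRingEnd ℂ) lam₂)
    let F : ℝ := 𝒜^2 * ((r - m)^2 + s^2) - ℬ^2 * s^2 * (Real.sin θ)^2
    (a₁₁ * a₂₂ - a₁₂ * a₂₁ =
        ((F / (4 * s^2 * (Real.sin θ)^2 * ((r - m)^2 + s^2)) : ℝ) : ℂ) ∨
      a₁₁ * a₂₂ - a₁₂ * a₂₁ =
        -((F / (4 * s^2 * (Real.sin θ)^2 * ((r - m)^2 + s^2)) : ℝ) : ℂ)) ∧
    (a₁₁ * a₂₂ - a₁₂ * a₂₁ ≠ 0 ↔ F ≠ 0) := by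
  intro lam₁ lam₂ a₁₁ a₁₂ a₂₁ a₂₂ F
  have hpy := Real.sin_sq_add_cos_sq θ
  set sn := Real.sin θ with hsn
  set cs := Real.cos θ with hcs
  have h1 : lam₁ - (starRingEnd ℂ) lam₁
      = 2 * Complex.I * s * ((cs : ℂ) - 1) := by
    simp only [lam₁, map_mul, map_sub, map_add, Complex.conj_ofReal,
      Complex.conj_I, map_one]
    ring
  have h2 : lam₂ - (starRingEnd ℂ) lam₂
      = -(2 * Complex.I * s) * ((cs : ℂ) + 1) := by
    simp only [lam₂, map_mul, map_sub, map_add, Complex.conj_ofReal,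
      Complex.conj_I, map_one]
    ring
  have h3 : lam₁ - (starRingEnd ℂ) lam₂ = -2 * ((r : ℂ) - m + Complex.I * s) := by
    simp only [lam₁, lam₂, map_mul, map_sub, map_add, Complex.conj_ofReal,
      Complex.conj_I, map_one]
    ring
  have h4 : lam₂ - (starRingEnd ℂ) lam₁ = 2 * ((r : ℂ) - m - Complex.I * s) := by
    simp only [lam₁, lam₂, map_mul, map_sub, map_add, Complex.conj_ofReal,
      Complex.conj_I, map_one]
    ring
  have hA : a₁₁ * a₂₂ = ((𝒜^2 / (-(4 * s^2 * sn^2)) : ℝ) : ℂ) := by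
    simp only [a₁₁, a₂₂, h1, h2, div_mul_div_comm]
    have hXY : (2 * Complex.I * s * ((cs : ℂ) - 1)) *
        (-(2 * Complex.I * s) * ((cs : ℂ) + 1))
        = ((-(4 * s^2 * sn^2) : ℝ) : ℂ) := by
      push_cast
      have hpyC : (sn : ℂ)^2 + (cs : ℂ)^2 = 1 := by exact_mod_cast hpy
      linear_combination (-4 * (s:ℂ)^2 * ((cs : ℂ)^2 - 1)) * Complex.I_sq
        + (4 * (s:ℂ)^2) * hpyC
    rw [hXY]
    push_cast
    ring
  have hB : a₁₂ * a₂₁ = ((ℬ^2 / (-(4 * ((r - m)^2 + s^2))) : ℝ) : ℂ) := by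
    simp only [a₁₂, a₂₁, h3, h4, div_mul_div_comm]
    have hXY : (-2 * ((r : ℂ) - m + Complex.I * s)) *
        (2 * ((r : ℂ) - m - Complex.I * s))
        = ((-(4 * ((r - m)^2 + s^2)) : ℝ) : ℂ) := by
      push_cast
      linear_combination (4 * (s:ℂ)^2) * Complex.I_sq
    rw [hXY]
    push_cast
    ring
  have hR : (0:ℝ) < (r - m)^2 + s^2 := by positivity
  have key : a₁₁ * a₂₂ - a₁₂ * a₂₁ =
      -((F / (4 * s^2 * sn^2 * ((r - m)^2 + s^2)) : ℝ) : ℂ) := by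
    rw [hA, hB, ← Complex.ofReal_sub, ← Complex.ofReal_neg]
    congr 1
    have hs2 : (s:ℝ)^2 ≠ 0 := pow_ne_zero _ hs.ne'
    have hsin2 : sn^2 ≠ 0 := pow_ne_zero _ hsin
    field_simp [F]
    ring
  have hden : (4 * s^2 * sn^2 * ((r - m)^2 + s^2)) ≠ 0 := by positivity
  refine ⟨Or.inr key, ?_⟩
  rw [key]
  simp only [ne_eq, neg_eq_zero, Complex.ofReal_eq_zero, div_eq_zero_iff]
  tauto
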